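/- Let (X, μ) be a measure space with finite total mass m₀ := μ(X) ∈ (0, ∞), let p, q be real with 1 < p < 2 and 1 ≤ q ≤ p, and let u : X → ℝ belong to L^p(μ). Set ū := (1/m₀) ∫_X u dμ. Then (∫_X |u|^p dμ)^{q/p} ≤ m₀^{q/p − q} |∫_X u dμ|^q + (1 + p (p−1)^{p−1})^{q/p} (∫_X |u − ū|^p dμ)^{q/p}. -/

import Mathlib

open MeasureTheory Real

lemma rpow_subadd' {x y z : ℝ} (hx : 0 ≤ x) (hy : 0 ≤ y) (hz : 0 ≤ z) (hz1 : z ≤ 1) :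
    (x + y) ^ z ≤ x ^ z + y ^ z := by
  have h := NNReal.rpow_add_le_add_rpow (⟨x, hx⟩ : NNReal) (⟨y, hy⟩ : NNReal) hz hz1
  exact_mod_cast h

lemma lemA {p : ℝ} (hp1 : 1 < p) (hp2 : p ≤ 2) {t : ℝ} (ht : 0 ≤ t) :
    (1 + t) ^ p ≤ 1 + p * t + t ^ p := by
  have hp0 : (0:ℝ) < p := by linarith
  set g : ℝ → ℝ := fun t => 1 + p * t + t ^ p - (1 + t) ^ p with hg
  have hcont : Continuous g := by
    apply Continuous.sub
    · exact (continuous_const.add (continuous_const.mul continuous_id)).add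
        (continuous_id.rpow_const fun x => Or.inr hp0.le)
    · exact (continuous_const.add continuous_id).rpow_const fun x => Or.inr hp0.le
  have hd : ∀ x ∈ Set.Ioi (0:ℝ),
      HasDerivAt g (p + p * x ^ (p-1) - 1 * p * (1 + x) ^ (p-1)) x := by
    intro x hx
    have h1 : HasDerivAt (fun t : ℝ => 1 + p * t) p x := by
      simpa using (hasDerivAt_id x).const_mul p |>.const_add 1
    have h2 : HasDerivAt (fun t : ℝ => t ^ p) (p * x ^ (p-1)) x :=
      Real.hasDerivAt_rpow_const (Or.inl (ne_of_gt hx))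
    have h3 : HasDerivAt (fun t : ℝ => (1 + t) ^ p) (1 * p * (1 + x) ^ (p-1)) x :=
      ((hasDerivAt_id x).const_add 1).rpow_const (Or.inl (ne_of_gt (by have hx0 := Set.mem_Ioi.mp hx; simp only [id_eq]; linarith)))
    exact (h1.add h2).sub h3
  have hmono : MonotoneOn g (Set.Ici (0:ℝ)) := by
    apply monotoneOn_of_deriv_nonneg (convex_Ici 0) hcont.continuousOn
    · intro x hx
      rw [interior_Ici] at hx
      exact ((hd x hx).differentiableAt).differentiableWithinAt
    · intro x hx
      rw [interior_Ici] at hx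
      rw [(hd x hx).deriv]
      have hsub : (1 + x) ^ (p-1) ≤ 1 + x ^ (p-1) := by
        have h := rpow_subadd' zero_le_one (le_of_lt hx) (by linarith : (0:ℝ) ≤ p - 1)
          (by linarith : p - 1 ≤ 1)
        simpa using h
      nlinarith [Real.rpow_nonneg (le_of_lt hx) (p-1)]
  have h0 : g 0 = 0 := by
    simp [hg, Real.zero_rpow hp0.ne', Real.one_rpow]
  have := hmono (Set.self_mem_Ici) (Set.mem_Ici.mpr ht) ht
  rw [h0] at this
  simpa [hg, sub_nonneg] using this
lemma lemB {p : ℝ} (hp1 : 1 < p) (hp2 : p ≤ 2) {s : ℝ} (h0 : 0 ≤ s) (h1 : s ≤ 1) :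
    (1 - s) ^ p ≤ 1 - p * s + s ^ p := by
  have hp0 : (0:ℝ) < p := by linarith
  set g : ℝ → ℝ := fun s => 1 - p * s + s ^ p - (1 - s) ^ p with hg
  have hcont : Continuous g := by
    apply Continuous.sub
    · exact (continuous_const.sub (continuous_const.mul continuous_id)).add
        (continuous_id.rpow_const fun x => Or.inr hp0.le)
    · exact (continuous_const.sub continuous_id).rpow_const fun x => Or.inr hp0.le
  have hd : ∀ x ∈ Set.Ioo (0:ℝ) 1,
      HasDerivAt g (-p + p * x ^ (p-1) - (-1) * p * (1 - x) ^ (p-1)) x := by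
    intro x hx
    obtain ⟨hxl, hxr⟩ := hx
    have h1 : HasDerivAt (fun t : ℝ => 1 - p * t) (-p) x := by
      simpa using ((hasDerivAt_id x).const_mul p).const_sub 1
    have h2 : HasDerivAt (fun t : ℝ => t ^ p) (p * x ^ (p-1)) x :=
      Real.hasDerivAt_rpow_const (Or.inl (ne_of_gt hxl))
    have h3 : HasDerivAt (fun t : ℝ => (1 - t) ^ p) ((-1) * p * (1 - x) ^ (p-1)) x := by
      have hb : HasDerivAt (fun t : ℝ => 1 - t) (-1) x := by
        simpa using (hasDerivAt_id x).const_sub 1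
      exact hb.rpow_const (Or.inl (ne_of_gt (by linarith)))
    exact (h1.add h2).sub h3
  have hmono : MonotoneOn g (Set.Icc (0:ℝ) 1) := by
    apply monotoneOn_of_deriv_nonneg (convex_Icc 0 1) hcont.continuousOn
    · intro x hx
      rw [interior_Icc] at hx
      exact ((hd x hx).differentiableAt).differentiableWithinAt
    · intro x hx
      rw [interior_Icc] at hx
      rw [(hd x hx).deriv]
      obtain ⟨hxl, hxr⟩ := hx
      have e1 : x ≤ x ^ (p-1) := by
        have := Real.rpow_le_rpow_of_exponent_ge hxl (le_of_lt hxr)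
          (by linarith : p - 1 ≤ 1)
        simpa using this
      have e2 : 1 - x ≤ (1 - x) ^ (p-1) := by
        have := Real.rpow_le_rpow_of_exponent_ge (by linarith : (0:ℝ) < 1 - x)
          (by linarith) (by linarith : p - 1 ≤ 1)
        simpa using this
      nlinarith
  have h00 : g 0 = 0 := by
    simp [hg, Real.zero_rpow hp0.ne', Real.one_rpow]
  have := hmono (Set.left_mem_Icc.mpr zero_le_one) (Set.mem_Icc.mpr ⟨h0, h1⟩) h0
  rw [h00] at this
  simpa [hg, sub_nonneg] using this
lemma young_lin {p : ℝ} (hp1 : 1 < p) {s : ℝ} (hs : 0 ≤ s) :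
    p * s ≤ 1 + (p - 1) ^ (p - 1) * s ^ p := by
  have hp0 : (0:ℝ) < p := by linarith
  have hb : (0:ℝ) < p - 1 := by linarith
  have h := Real.geom_mean_le_arith_mean2_weighted
    (by positivity : (0:ℝ) ≤ 1/p) (by positivity : (0:ℝ) ≤ (p-1)/p)
    (by positivity : (0:ℝ) ≤ p * (p-1)^(p-1) * s^p)
    (by positivity : (0:ℝ) ≤ p/(p-1))
    (by field_simp; ring)
  have h1 : (p * (p-1)^(p-1) * s^p) ^ (1/p) = p^(1/p) * (p-1)^((p-1)/p) * s := by
    rw [Real.mul_rpow (by positivity) (Real.rpow_nonneg hs p),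
        Real.mul_rpow (by positivity) (by positivity),
        ← Real.rpow_mul hb.le, ← Real.rpow_mul hs, mul_one_div, mul_one_div,
        div_self hp0.ne', Real.rpow_one]
  have h2 : (p/(p-1)) ^ ((p-1)/p) = p^((p-1)/p) / (p-1)^((p-1)/p) :=
    Real.div_rpow hp0.le hb.le _
  have h3 : p^(1/p) * p^((p-1)/p) = p := by
    rw [← Real.rpow_add hp0, show 1/p + (p-1)/p = 1 by field_simp; ring, Real.rpow_one]
  have hne : ((p-1):ℝ)^((p-1)/p) ≠ 0 := by positivity
  have hL : (p * (p-1)^(p-1) * s^p) ^ (1/p) * (p/(p-1)) ^ ((p-1)/p) = p * s := by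
    rw [h1, h2]
    field_simp
    linear_combination s * h3
  have hR : 1/p * (p * (p-1)^(p-1) * s^p) + (p-1)/p * (p/(p-1)) = (p-1)^(p-1) * s^p + 1 := by
    field_simp
  calc p * s = _ := hL.symm
    _ ≤ _ := h
    _ = (p-1)^(p-1) * s^p + 1 := hR
    _ = 1 + (p-1)^(p-1) * s^p := by ring

lemma key_pt {p : ℝ} (hp1 : 1 < p) (hp2 : p ≤ 2) (t : ℝ) :
    |1 + t| ^ p ≤ 1 + p * t + (1 + p * (p-1) ^ (p-1)) * |t| ^ p := by
  have hp0 : (0:ℝ) < p := by linarith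
  have hCg : (0:ℝ) ≤ p * (p-1) ^ (p-1) :=
    mul_nonneg hp0.le (Real.rpow_nonneg (by linarith) _)
  rcases le_or_gt 0 t with ht | ht
  · rw [abs_of_nonneg (by linarith : (0:ℝ) ≤ 1 + t), abs_of_nonneg ht]
    have := lemA hp1 hp2 ht
    nlinarith [Real.rpow_nonneg ht p]
  rcases le_or_gt (-1) t with ht1 | ht1
  · -- -1 ≤ t < 0
    rw [abs_of_nonneg (by linarith : (0:ℝ) ≤ 1 + t), abs_of_neg ht]
    have hB := lemB hp1 hp2 (by linarith : (0:ℝ) ≤ -t) (by linarith : -t ≤ 1)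
    rw [show (1:ℝ) - -t = 1 + t by ring] at hB
    nlinarith [Real.rpow_nonneg (by linarith : (0:ℝ) ≤ -t) p]
  · -- t < -1
    rw [abs_of_neg ht, abs_of_neg (by linarith : 1 + t < 0)]
    have hY := young_lin hp1 (by linarith : (0:ℝ) ≤ -t)
    have hM : (-(1+t)) ^ p ≤ (-t) ^ p :=
      Real.rpow_le_rpow (by linarith) (by linarith) hp0.le
    have hpow : (0:ℝ) ≤ (-t) ^ p := Real.rpow_nonneg (by linarith) p
    have hbp : (0:ℝ) ≤ (p-1) ^ (p-1) := Real.rpow_nonneg (by linarith) _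
    nlinarith [mul_nonneg (mul_nonneg (by linarith : (0:ℝ) ≤ p - 1) hbp) hpow]

lemma key_scaled {p : ℝ} (hp1 : 1 < p) (hp2 : p ≤ 2) (a : ℝ) :
    ∃ k : ℝ, ∀ b : ℝ, |a + b| ^ p ≤
      |a| ^ p + k * b + (1 + p * (p-1) ^ (p-1)) * |b| ^ p := by
  have hp0 : (0:ℝ) < p := by linarith
  have hC1 : (1:ℝ) ≤ 1 + p * (p-1) ^ (p-1) := by
    have : (0:ℝ) ≤ p * (p-1) ^ (p-1) :=
      mul_nonneg hp0.le (Real.rpow_nonneg (by linarith) _)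
    linarith
  have main : ∀ a : ℝ, 0 < a → ∀ b : ℝ, |a + b| ^ p ≤
      |a| ^ p + (p * a ^ (p-1)) * b + (1 + p * (p-1) ^ (p-1)) * |b| ^ p := by
    intro a ha b
    have hkey := key_pt hp1 hp2 (b / a)
    have habs : |a + b| = a * |1 + b / a| := by
      rw [show a * |1 + b / a| = |a * (1 + b / a)| by rw [abs_mul, abs_of_pos ha]]
      congr 1
      field_simp
    have h2 : |a + b| ^ p = a ^ p * |1 + b / a| ^ p := by
      rw [habs, Real.mul_rpow ha.le (abs_nonneg _)]
    have hap : a ^ p ≠ 0 := ne_of_gt (Real.rpow_pos_of_pos ha p)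
    have h3 : a ^ p * (1 + p * (b / a) + (1 + p * (p-1) ^ (p-1)) * |b / a| ^ p)
        = a ^ p + (p * a ^ (p-1)) * b + (1 + p * (p-1) ^ (p-1)) * |b| ^ p := by
      have e1' : a ^ (p-1) * a = a ^ p := by
        rw [Real.rpow_sub_one (ne_of_gt ha)]
        field_simp
      have e2 : |b / a| ^ p = |b| ^ p / a ^ p := by
        rw [abs_div, abs_of_pos ha, Real.div_rpow (abs_nonneg _) ha.le]
      rw [e2]
      field_simp
      linear_combination (-(p * b)) * e1'
    rw [h2, abs_of_pos ha, ← h3]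
    have hap : (0:ℝ) < a ^ p := Real.rpow_pos_of_pos ha p
    nlinarith [hkey]
  rcases lt_trichotomy a 0 with ha | ha | ha
  · refine ⟨-(p * (-a) ^ (p-1)), fun b => ?_⟩
    have := main (-a) (by linarith) (-b)
    rw [show -a + -b = -(a+b) by ring, abs_neg, abs_neg, abs_neg] at this
    calc |a + b| ^ p ≤ |a| ^ p + (p * (-a) ^ (p-1)) * (-b)
          + (1 + p * (p-1) ^ (p-1)) * |b| ^ p := this
      _ = |a| ^ p + (-(p * (-a) ^ (p-1))) * b + (1 + p * (p-1) ^ (p-1)) * |b| ^ p := by ring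
  · refine ⟨0, fun b => ?_⟩
    subst ha
    simp only [zero_add, abs_zero, Real.zero_rpow hp0.ne', zero_mul, zero_add, mul_zero]
    nlinarith [Real.rpow_nonneg (abs_nonneg b) p]
  · exact ⟨p * a ^ (p-1), main a ha⟩

theorem stmt_12 {X : Type*} [MeasurableSpace X] (μ : Measure X)
    [IsFiniteMeasure μ] (m₀ : ℝ) (hm₀ : m₀ = (μ Set.univ).toReal)
    (hm₀pos : 0 < m₀) (p q : ℝ) (hp1 : 1 < p) (hp2 : p < 2)
    (hq1 : 1 ≤ q) (hqp : q ≤ p) (u : X → ℝ)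
    (hu : MemLp u (ENNReal.ofReal p) μ) :
    (∫ x, |u x| ^ p ∂μ) ^ (q / p) ≤
      m₀ ^ (q / p - q) * |∫ x, u x ∂μ| ^ q +
        (1 + p * (p - 1) ^ (p - 1)) ^ (q / p) *
          (∫ x, |u x - (1 / m₀) * ∫ y, u y ∂μ| ^ p ∂μ) ^ (q / p) := by
  have hp0 : (0:ℝ) < p := by linarith
  have hC0 : (0:ℝ) ≤ 1 + p * (p - 1) ^ (p - 1) := by
    have := mul_nonneg hp0.le (Real.rpow_nonneg (by linarith : (0:ℝ) ≤ p - 1) (p - 1))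
    linarith
  set I : ℝ := ∫ x, u x ∂μ with hI
  set c : ℝ := 1 / m₀ * I with hc
  have hone : (1:ENNReal) ≤ ENNReal.ofReal p := by
    rw [← ENNReal.ofReal_one]
    exact ENNReal.ofReal_le_ofReal hp1.le
  have hui : Integrable u μ := hu.integrable hone
  have hwmem : MemLp (fun x => u x - c) (ENNReal.ofReal p) μ := by
    have := hu.sub (memLp_const (μ := μ) c)
    exact this
  have hwi : Integrable (fun x => u x - c) μ := hui.sub (integrable_const c)
  have hne0 : ENNReal.ofReal p ≠ 0 := by
    simp [ENNReal.ofReal_eq_zero, not_le, hp0]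
  have hIu : Integrable (fun x => |u x| ^ p) μ := by
    have := hu.integrable_norm_rpow hne0 (by simp)
    simpa [Real.norm_eq_abs, ENNReal.toReal_ofReal hp0.le] using this
  have hIw : Integrable (fun x => |u x - c| ^ p) μ := by
    have := hwmem.integrable_norm_rpow hne0 (by simp)
    simpa [Real.norm_eq_abs, ENNReal.toReal_ofReal hp0.le] using this
  have hw0 : ∫ x, (u x - c) ∂μ = 0 := by
    rw [integral_sub hui (integrable_const c), integral_const, measureReal_def, ← hm₀, smul_eq_mul, hc]
    field_simp
    exact sub_self _
  obtain ⟨k, hk⟩ := key_scaled hp1 hp2.le c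
  have hptw : ∀ x, |u x| ^ p ≤
      |c| ^ p + k * (u x - c) + (1 + p * (p - 1) ^ (p - 1)) * |u x - c| ^ p := by
    intro x
    have h := hk (u x - c)
    rwa [show c + (u x - c) = u x by ring] at h
  have step1 : ∫ x, |u x| ^ p ∂μ ≤
      m₀ * |c| ^ p + (1 + p * (p - 1) ^ (p - 1)) * ∫ x, |u x - c| ^ p ∂μ := by
    have hA2 : Integrable (fun x => k * (u x - c)) μ := by
      simpa using hwi.const_mul k
    have hB : Integrable (fun x => (1 + p * (p - 1) ^ (p - 1)) * |u x - c| ^ p) μ := by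
      simpa using hIw.const_mul (1 + p * (p - 1) ^ (p - 1))
    have hA : Integrable (fun x => |c| ^ p + k * (u x - c)) μ :=
      (integrable_const _).add hA2
    have h := integral_mono hIu (hA.add hB) hptw
    simp only [Pi.add_apply] at h
    rwa [integral_add hA hB, integral_add (integrable_const _) hA2,
      integral_const, integral_const_mul, integral_const_mul, hw0, mul_zero, add_zero,
      measureReal_def, ← hm₀, smul_eq_mul] at h
  have hIu0 : 0 ≤ ∫ x, |u x| ^ p ∂μ :=
    integral_nonneg fun x => Real.rpow_nonneg (abs_nonneg _) p
  have hIw0 : 0 ≤ ∫ x, |u x - c| ^ p ∂μ :=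
    integral_nonneg fun x => Real.rpow_nonneg (abs_nonneg _) p
  have hr0 : (0:ℝ) ≤ q / p := by positivity
  have hr1 : q / p ≤ 1 := by rw [div_le_one hp0]; exact hqp
  have t1 : (m₀ * |c| ^ p) ^ (q / p) = m₀ ^ (q / p - q) * |I| ^ q := by
    rw [Real.mul_rpow hm₀pos.le (Real.rpow_nonneg (abs_nonneg _) _),
      ← Real.rpow_mul (abs_nonneg c), mul_div_cancel₀ q hp0.ne']
    rw [hc, abs_mul, abs_of_pos (by positivity : (0:ℝ) < 1 / m₀),
      Real.mul_rpow (by positivity) (abs_nonneg I), one_div,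
      Real.inv_rpow hm₀pos.le, ← Real.rpow_neg hm₀pos.le,
      ← mul_assoc, ← Real.rpow_add hm₀pos, ← sub_eq_add_neg]
  have t2 : ((1 + p * (p - 1) ^ (p - 1)) * ∫ x, |u x - c| ^ p ∂μ) ^ (q / p)
      = (1 + p * (p - 1) ^ (p - 1)) ^ (q / p) * (∫ x, |u x - c| ^ p ∂μ) ^ (q / p) :=
    Real.mul_rpow hC0 hIw0
  calc (∫ x, |u x| ^ p ∂μ) ^ (q / p)
      ≤ (m₀ * |c| ^ p + (1 + p * (p - 1) ^ (p - 1)) * ∫ x, |u x - c| ^ p ∂μ) ^ (q / p) :=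
        Real.rpow_le_rpow hIu0 step1 hr0
    _ ≤ (m₀ * |c| ^ p) ^ (q / p)
        + ((1 + p * (p - 1) ^ (p - 1)) * ∫ x, |u x - c| ^ p ∂μ) ^ (q / p) :=
        rpow_subadd' (by positivity) (mul_nonneg hC0 hIw0) hr0 hr1
    _ = m₀ ^ (q / p - q) * |I| ^ q
        + (1 + p * (p - 1) ^ (p - 1)) ^ (q / p) * (∫ x, |u x - c| ^ p ∂μ) ^ (q / p) := by
        rw [t1, t2]
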